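/- Let G be a graph with no cycle of length at most 2t², and let Q_1, …, Q_m be pairwise disjoint vertex sets, each spanning a path on t vertices in G. Define the auxiliary graph H on vertex set {Q_1,…,Q_m} with Q_iQ_j an edge iff there is an edge of G between the vertex sets Q_i and Q_j. Then H contains no cycle of length at most 2t. -/

import Mathlib

/-- `Q` is the vertex set of a path on `t` vertices in `G`. -/
def SpansPath {V : Type*} [DecidableEq V] (G : SimpleGraph V) (t : ℕ)
    (Q : Finset V) : Prop :=
  ∃ f : Fin t → V, Function.Injective f ∧ Finset.image f Finset.univ = Q ∧
    ∀ (l : ℕ) (h : l + 1 < t), G.Adj (f ⟨l, by omega⟩) (f ⟨l + 1, h⟩)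

/-- The auxiliary graph on the blocks `Q_1, …, Q_m`: two blocks are adjacent iff
`G` has an edge between them. -/
def auxGraph {V : Type*} (G : SimpleGraph V) (m : ℕ) (Q : Fin m → Finset V) :
    SimpleGraph (Fin m) where
  Adj i j := i ≠ j ∧ ∃ u ∈ Q i, ∃ v ∈ Q j, G.Adj u v
  symm := ⟨by
    rintro i j ⟨hij, u, hu, v, hv, h⟩
    exact ⟨hij.symm, v, hv, u, hu, h.symm⟩⟩
  loopless := ⟨fun i h => h.1 rfl⟩

section Aux

variable {V : Type*} [DecidableEq V] (G : SimpleGraph V)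

/-- monotone walk along the path spanning a block -/
lemma mono_walk {t : ℕ} (f : Fin t → V)
    (hadj : ∀ (l : ℕ) (h : l + 1 < t), G.Adj (f ⟨l, by omega⟩) (f ⟨l + 1, h⟩)) :
    ∀ (d : ℕ) (a b : Fin t), (b : ℕ) = (a : ℕ) + d →
      ∃ P : G.Walk (f a) (f b), P.length = d ∧ ∀ v ∈ P.support, ∃ k, v = f k := by
  intro d
  induction d with
  | zero =>
    intro a b hab
    have : a = b := Fin.ext (by omega)
    subst this
    exact ⟨SimpleGraph.Walk.nil, rfl, fun v hv => ⟨a, by simpa using hv⟩⟩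
  | succ d ih =>
    intro a b hab
    have h1 : (a : ℕ) + 1 < t := by omega
    have ha : G.Adj (f a) (f ⟨(a : ℕ) + 1, h1⟩) := by
      have := hadj a h1
      convert this using 2
    obtain ⟨P, hP, hsup⟩ := ih ⟨(a : ℕ) + 1, h1⟩ b (by simp; omega)
    refine ⟨SimpleGraph.Walk.cons ha P, by simp [hP], ?_⟩
    intro v hv
    rw [SimpleGraph.Walk.support_cons] at hv
    rcases List.mem_cons.mp hv with hv | hv
    · exact ⟨a, hv⟩
    · exact hsup v hv

/-- internal walk within a block -/
lemma internal_walk {t : ℕ} {Qc : Finset V} (h : SpansPath G t Qc) {x y : V}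
    (hx : x ∈ Qc) (hy : y ∈ Qc) :
    ∃ P : G.Walk x y, P.length ≤ t - 1 ∧ ∀ v ∈ P.support, v ∈ Qc := by
  obtain ⟨f, hinj, himg, hadj⟩ := h
  rw [← himg] at hx hy
  obtain ⟨a, -, rfl⟩ := Finset.mem_image.mp hx
  obtain ⟨b, -, rfl⟩ := Finset.mem_image.mp hy
  have hsub : ∀ {x y : V} {P : G.Walk x y}, (∀ v ∈ P.support, ∃ k, v = f k) →
      ∀ v ∈ P.support, v ∈ Qc := by
    intro x y P hP v hv
    obtain ⟨k, rfl⟩ := hP v hv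
    rw [← himg]; exact Finset.mem_image_of_mem f (Finset.mem_univ k)
  rcases le_or_gt (a : ℕ) (b : ℕ) with hab | hab
  · obtain ⟨P, hP, hs⟩ := mono_walk G f hadj ((b : ℕ) - (a : ℕ)) a b (by omega)
    exact ⟨P, by have := b.isLt; omega, hsub hs⟩
  · obtain ⟨P, hP, hs⟩ := mono_walk G f hadj ((a : ℕ) - (b : ℕ)) b a (by omega)
    refine ⟨P.reverse, by simp [hP]; have := a.isLt; omega, ?_⟩
    intro v hv
    rw [SimpleGraph.Walk.support_reverse, List.mem_reverse] at hv
    exact hsub hs v hv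

lemma lift_walk {t m : ℕ} (Q : Fin m → Finset V)
    (hdisj : ∀ i j, i ≠ j → Disjoint (Q i) (Q j))
    (hpath : ∀ i, SpansPath G t (Q i))
    {i j : Fin m} (hij : i ≠ j) {u1 v2 : V} (hu1 : u1 ∈ Q i) (hv2 : v2 ∈ Q j) :
    ∀ {a b : Fin m} (p : (auxGraph G m Q).Walk a b) (x z : V), x ∈ Q a → z ∈ Q b →
      s(i, j) ∉ p.edges →
      ∃ P : G.Walk x z, P.length ≤ p.length * t + (t - 1) ∧ s(u1, v2) ∉ P.edges := by
  have blockEq : ∀ {a b : Fin m} {v : V}, v ∈ Q a → v ∈ Q b → a = b := by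
    intro a b v ha hb
    by_contra hne
    exact (Finset.disjoint_left.mp (hdisj a b hne)) ha hb
  -- internal walks avoid s(u1,v2)
  have internal_avoid : ∀ {a : Fin m} {x y : V} (W : G.Walk x y),
      (∀ v ∈ W.support, v ∈ Q a) → s(u1, v2) ∉ W.edges := by
    intro a x y W hsup he
    have h1 : u1 ∈ Q a := hsup _ (W.fst_mem_support_of_mem_edges he)
    have h2 : v2 ∈ Q a := hsup _ (W.snd_mem_support_of_mem_edges he)
    exact hij ((blockEq hu1 h1).trans (blockEq h2 hv2))
  intro a b p
  induction p with
  | nil =>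
    intro x z hx hz _
    obtain ⟨P, hPl, hPs⟩ := internal_walk G (hpath _) hx hz
    exact ⟨P, by simpa using hPl, internal_avoid P hPs⟩
  | @cons a c b h' p' ih =>
    intro x z hx hz hp
    rw [SimpleGraph.Walk.edges_cons, List.mem_cons] at hp
    push_neg at hp
    obtain ⟨hp1, hp2⟩ := hp
    obtain ⟨hac, u, hu, v, hv, huv⟩ := id h'
    obtain ⟨W1, hW1l, hW1s⟩ := internal_walk G (hpath a) hx hu
    obtain ⟨P', hP'l, hP'e⟩ := ih v z hv hz hp2
    have ht : 1 ≤ t := by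
      obtain ⟨f, -, himg, -⟩ := hpath a
      rcases Nat.eq_zero_or_pos t with rfl | ht
      · rw [← himg] at hx; simp at hx
      · exact ht
    refine ⟨W1.append (SimpleGraph.Walk.cons huv P'), ?_, ?_⟩
    · rw [SimpleGraph.Walk.length_append, SimpleGraph.Walk.length_cons,
        SimpleGraph.Walk.length_cons]
      have : (p'.length + 1) * t = p'.length * t + t := by ring
      omega
    · rw [SimpleGraph.Walk.edges_append, List.mem_append, SimpleGraph.Walk.edges_cons,
        List.mem_cons]
      push_neg
      refine ⟨internal_avoid W1 hW1s, ?_, hP'e⟩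
      intro heq
      rw [Sym2.eq_iff] at heq
      rcases heq with ⟨rfl, rfl⟩ | ⟨rfl, rfl⟩
      · exact hp1 (by rw [blockEq hu hu1, blockEq hv hv2])
      · exact hp1 (by rw [blockEq hu hv2, blockEq hv hu1, Sym2.eq_swap])

end Aux

/-- If `G` has no cycle of length at most `2t²` and `Q_1, …, Q_m` are
pairwise disjoint sets each spanning a path on `t` vertices in `G`, then the auxiliary
graph `H` on the blocks has no cycle of length at most `2t`. -/
theorem stmt7 {V : Type*} [DecidableEq V] (G : SimpleGraph V) (t m : ℕ)
    (hgirth : ∀ (v : V) (w : G.Walk v v), w.IsCycle → 2 * t ^ 2 < w.length)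
    (Q : Fin m → Finset V)
    (hdisj : ∀ i j, i ≠ j → Disjoint (Q i) (Q j))
    (hpath : ∀ i, SpansPath G t (Q i)) :
    ∀ (i : Fin m) (w : (auxGraph G m Q).Walk i i), w.IsCycle → 2 * t < w.length := by
  intro i w hw
  by_contra hlen
  push_neg at hlen
  cases w with
  | nil => exact hw.ne_nil rfl
  | @cons _ j _ h w' =>
    obtain ⟨hij, u1, hu1, v2, hv2, huv⟩ := id h
    have hedges : s(i, j) ∉ w'.edges := by
      have := hw.edges_nodup
      rw [SimpleGraph.Walk.edges_cons] at this
      exact (List.nodup_cons.mp this).1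
    obtain ⟨P, hPl, hPe⟩ := lift_walk G Q hdisj hpath hij hu1 hv2 w' v2 u1 hv2 hu1
      (by rwa [Sym2.eq_swap] at hedges ⊢)
    have hPe' : s(u1, v2) ∉ (P.toPath : G.Walk v2 u1).edges :=
      fun hmem => hPe (P.edges_toPath_subset hmem)
    have hcyc := SimpleGraph.Path.cons_isCycle P.toPath huv hPe'
    have hglen := hgirth u1 _ hcyc
    rw [SimpleGraph.Walk.length_cons] at hglen
    have hbyp : (P.toPath : G.Walk v2 u1).length ≤ P.length :=
      SimpleGraph.Walk.length_bypass_le P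
    have ht1 : 1 ≤ t := by
      obtain ⟨f, -, himg, -⟩ := hpath i
      rcases Nat.eq_zero_or_pos t with rfl | ht'
      · rw [← himg] at hu1; simp at hu1
      · exact ht'
    rw [SimpleGraph.Walk.length_cons] at hlen
    have hmul : w'.length * t ≤ (2 * t - 1) * t := Nat.mul_le_mul_right t (by omega)
    have heq : (2 * t - 1) * t + t = 2 * t ^ 2 := by
      obtain ⟨n, rfl⟩ := Nat.exists_eq_add_of_le ht1
      have h1 : 2 * (1 + n) - 1 = 2 * n + 1 := by omega
      rw [h1]; ring
    omega
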